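/- (Dimension of the hypergraph product code.) Let n = |V|, m = |C|, k = dim(ker H) (right kernel of H over F₂) and k̃ = dim(ker Hᵗ). Then (n² + m²) − rank(H_X) − rank(H_Z) = k² + k̃²; that is, the hypergraph product code encodes k² + k̃² logical qubits. -/

import Mathlib

open Matrix Kronecker

section Aux

variable {K : Type*} [Field K]

open Module LinearMap

/-- finrank of the range of a tensor product of maps. -/
lemma finrank_range_tensorMap {M N P Q : Type*}
    [AddCommGroup M] [AddCommGroup N] [AddCommGroup P] [AddCommGroup Q]
    [Module K M] [Module K N] [Module K P] [Module K Q]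
    (f : M →ₗ[K] P) (g : N →ₗ[K] Q) :
    Module.finrank K (LinearMap.range (TensorProduct.map f g)) =
      Module.finrank K (LinearMap.range f) * Module.finrank K (LinearMap.range g) := by
  have h1 : LinearMap.range (TensorProduct.map f g)
      = LinearMap.range (TensorProduct.mapIncl (LinearMap.range f) (LinearMap.range g)) := by
    rw [TensorProduct.range_map_eq_span_tmul, TensorProduct.range_mapIncl,
      Submodule.map₂_eq_span_image2]
    congr 1
    ext t
    constructor
    · rintro ⟨m, n, rfl⟩
      exact Set.mem_image2_of_mem ⟨m, rfl⟩ ⟨n, rfl⟩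
    · rintro ⟨a, ⟨m, rfl⟩, b, ⟨n, rfl⟩, rfl⟩
      exact ⟨m, n, rfl⟩
  rw [h1, LinearMap.finrank_range_of_inj
      (Module.Flat.tensorProduct_mapIncl_injective_of_right _ _),
    Module.finrank_tensorProduct]

/-- The rank of a Kronecker product over a field. -/
lemma rank_kronecker {m n p q : Type*} [Fintype m] [Fintype n] [Fintype p] [Fintype q]
    [DecidableEq n] [DecidableEq q]
    (A : Matrix m n K) (B : Matrix p q K) :
    (A ⊗ₖ B).rank = A.rank * B.rank := by
  let bm := Pi.basisFun K m
  let bn := Pi.basisFun K n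
  let bp := Pi.basisFun K p
  let bq := Pi.basisFun K q
  rw [Matrix.rank_eq_finrank_range_toLin (A ⊗ₖ B) (bm.tensorProduct bp) (bn.tensorProduct bq),
    Matrix.toLin_kronecker, Matrix.rank_eq_finrank_range_toLin A bm bn,
    Matrix.rank_eq_finrank_range_toLin B bp bq]
  exact finrank_range_tensorMap _ _

/-- Range of `fromCols` is the sup of the two ranges. -/
lemma range_fromCols_mulVecLin {m n₁ n₂ : Type*} [Fintype m] [Fintype n₁] [Fintype n₂]
    (A : Matrix m n₁ K) (B : Matrix m n₂ K) :
    LinearMap.range (fromCols A B).mulVecLin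
      = LinearMap.range A.mulVecLin ⊔ LinearMap.range B.mulVecLin := by
  ext x
  simp only [LinearMap.mem_range, Submodule.mem_sup, mulVecLin_apply]
  constructor
  · rintro ⟨u, rfl⟩
    refine ⟨A *ᵥ (u ∘ Sum.inl), ⟨_, rfl⟩, B *ᵥ (u ∘ Sum.inr), ⟨_, rfl⟩, ?_⟩
    rw [← fromCols_mulVec_sumElim, Sum.elim_comp_inl_inr]
  · rintro ⟨_, ⟨u, rfl⟩, _, ⟨v, rfl⟩, rfl⟩
    exact ⟨Sum.elim u v, fromCols_mulVec_sumElim A B u v⟩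

/-- Existence of a generalized inverse over a field. -/
lemma exists_generalized_inverse {m n : Type*} [Fintype m] [Fintype n]
    [DecidableEq m] [DecidableEq n] (A : Matrix m n K) :
    ∃ G : Matrix n m K, A * G * A = A := by
  set h := A.mulVecLin with hh
  obtain ⟨g₀, hg₀⟩ := h.rangeRestrict.exists_rightInverse_of_surjective
    (LinearMap.range_eq_top.2 h.surjective_rangeRestrict)
  obtain ⟨q, hq⟩ := Submodule.exists_isCompl (LinearMap.range h)
  let π := (LinearMap.range h).linearProjOfIsCompl q hq
  refine ⟨LinearMap.toMatrix' (g₀ ∘ₗ (π : (m → K) →ₗ[K] LinearMap.range h)), ?_⟩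
  apply Matrix.toLin'.injective
  refine LinearMap.ext fun x => ?_
  have key : ∀ z : LinearMap.range h, h (g₀ z) = (z : m → K) := by
    intro z
    exact congrArg Subtype.val (LinearMap.congr_fun hg₀ z)
  rw [Matrix.toLin'_apply, Matrix.toLin'_apply, ← Matrix.mulVec_mulVec, ← Matrix.mulVec_mulVec]
  have hG : (LinearMap.toMatrix' (g₀ ∘ₗ (π : (m → K) →ₗ[K] LinearMap.range h))) *ᵥ (A *ᵥ x)
      = g₀ (π (A *ᵥ x)) := by
    have h2 := Matrix.toLin'_toMatrix' (g₀ ∘ₗ (π : (m → K) →ₗ[K] LinearMap.range h))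
    calc _ = Matrix.toLin' (LinearMap.toMatrix'
            (g₀ ∘ₗ (π : (m → K) →ₗ[K] LinearMap.range h))) (A *ᵥ x) := by
          rw [Matrix.toLin'_apply]
      _ = g₀ (π (A *ᵥ x)) := by rw [h2]; rfl
  rw [hG]
  have hπ : π (A *ᵥ x) = ⟨A *ᵥ x, ⟨x, rfl⟩⟩ :=
    Submodule.linearProjOfIsCompl_apply_left hq ⟨A *ᵥ x, ⟨x, rfl⟩⟩
  rw [hπ]
  exact key _

end Aux

section Aux2

variable {K : Type*} [Field K]
variable {V C : Type*} [Fintype V] [Fintype C] [DecidableEq V] [DecidableEq C]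

open Module LinearMap

lemma range_mul_le_left {m n p : Type*} [Fintype m] [Fintype n] [Fintype p]
    (A : Matrix m n K) (B : Matrix n p K) :
    LinearMap.range (A * B).mulVecLin ≤ LinearMap.range A.mulVecLin := by
  rw [Matrix.mulVecLin_mul]
  exact LinearMap.range_comp_le_range _ _

/-- The intersection of the ranges of `1 ⊗ A` and `Aᵀ ⊗ 1` is the range of `Aᵀ ⊗ A`. -/
lemma inf_range_kronecker (A : Matrix C V K) :
    LinearMap.range ((1 : Matrix V V K) ⊗ₖ A).mulVecLin
        ⊓ LinearMap.range (Aᵀ ⊗ₖ (1 : Matrix C C K)).mulVecLin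
      = LinearMap.range (Aᵀ ⊗ₖ A).mulVecLin := by
  have e₁ : Aᵀ ⊗ₖ A = ((1 : Matrix V V K) ⊗ₖ A) * (Aᵀ ⊗ₖ (1 : Matrix V V K)) := by
    rw [← Matrix.mul_kronecker_mul, Matrix.one_mul, Matrix.mul_one]
  have e₂ : Aᵀ ⊗ₖ A = (Aᵀ ⊗ₖ (1 : Matrix C C K)) * ((1 : Matrix C C K) ⊗ₖ A) := by
    rw [← Matrix.mul_kronecker_mul, Matrix.one_mul, Matrix.mul_one]
  apply le_antisymm
  · rintro x ⟨hx1, hx2⟩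
    obtain ⟨u, rfl⟩ := hx1
    obtain ⟨w, hw⟩ := hx2
    obtain ⟨G, hG⟩ := exists_generalized_inverse A
    have hGT : Aᵀ * Gᵀ * Aᵀ = Aᵀ := by
      have := congrArg Matrix.transpose hG
      simpa [Matrix.transpose_mul, Matrix.mul_assoc] using this
    refine ⟨(Gᵀ ⊗ₖ (1 : Matrix V V K)) *ᵥ u, ?_⟩
    simp only [mulVecLin_apply] at hw ⊢
    have m1 : (Aᵀ ⊗ₖ A) * (Gᵀ ⊗ₖ (1 : Matrix V V K)) = (Aᵀ * Gᵀ) ⊗ₖ A := by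
      rw [← Matrix.mul_kronecker_mul, Matrix.mul_one]
    have m2 : ((Aᵀ * Gᵀ) ⊗ₖ (1 : Matrix C C K)) * ((1 : Matrix V V K) ⊗ₖ A)
        = (Aᵀ * Gᵀ) ⊗ₖ A := by
      rw [← Matrix.mul_kronecker_mul, Matrix.mul_one, Matrix.one_mul]
    have m3 : ((Aᵀ * Gᵀ) ⊗ₖ (1 : Matrix C C K)) * (Aᵀ ⊗ₖ (1 : Matrix C C K))
        = Aᵀ ⊗ₖ (1 : Matrix C C K) := by
      rw [← Matrix.mul_kronecker_mul, Matrix.mul_one, hGT]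
    calc (Aᵀ ⊗ₖ A) *ᵥ ((Gᵀ ⊗ₖ (1 : Matrix V V K)) *ᵥ u)
        = ((Aᵀ * Gᵀ) ⊗ₖ A) *ᵥ u := by rw [Matrix.mulVec_mulVec, m1]
      _ = ((Aᵀ * Gᵀ) ⊗ₖ (1 : Matrix C C K)) *ᵥ (((1 : Matrix V V K) ⊗ₖ A) *ᵥ u) := by
          rw [Matrix.mulVec_mulVec, m2]
      _ = ((Aᵀ * Gᵀ) ⊗ₖ (1 : Matrix C C K)) *ᵥ ((Aᵀ ⊗ₖ (1 : Matrix C C K)) *ᵥ w) := by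
          rw [hw]
      _ = (Aᵀ ⊗ₖ (1 : Matrix C C K)) *ᵥ w := by rw [Matrix.mulVec_mulVec, m3]
      _ = ((1 : Matrix V V K) ⊗ₖ A) *ᵥ u := hw
  · refine le_inf ?_ ?_
    · rw [e₁]; exact range_mul_le_left _ _
    · rw [e₂]; exact range_mul_le_left _ _

end Aux2

section Aux3

variable {K : Type*} [Field K]

/-- Rank is invariant under reindexing by equivalences (rectangular version). -/
lemma rank_submatrix_equiv {m n m' n' : Type*} [Fintype m] [Fintype n] [Fintype m'] [Fintype n']
    (A : Matrix m n K) (e₁ : m' ≃ m) (e₂ : n' ≃ n) :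
    (A.submatrix e₁ e₂).rank = A.rank := by
  rw [Matrix.rank, Matrix.rank, Matrix.mulVecLin_submatrix, LinearMap.range_comp,
    LinearMap.range_comp,
    show LinearMap.funLeft K K e₂.symm = (LinearEquiv.funCongrLeft K K e₂.symm : _) from rfl,
    show LinearMap.funLeft K K (e₁ : m' → m) = (LinearEquiv.funCongrLeft K K e₁ : _) from rfl,
    LinearEquiv.range, Submodule.map_top, LinearEquiv.finrank_map_eq]

end Aux3

variable {V C : Type*} [Fintype V] [Fintype C] [DecidableEq V] [DecidableEq C]

/-- X-stabilizer matrix `H_X = (1_V ⊗ H | Hᵗ ⊗ 1_C)` of the hypergraph product of `H`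
with itself. Rows are indexed by `V × C`, column blocks by `V × V` and `C × C`. -/
def HX (H : Matrix C V (ZMod 2)) : Matrix (V × C) ((V × V) ⊕ (C × C)) (ZMod 2) :=
  Matrix.fromCols ((1 : Matrix V V (ZMod 2)) ⊗ₖ H) (Hᵀ ⊗ₖ (1 : Matrix C C (ZMod 2)))

/-- Z-stabilizer matrix `H_Z = (H ⊗ 1_V | 1_C ⊗ Hᵗ)`. Rows are indexed by `C × V`. -/
def HZ (H : Matrix C V (ZMod 2)) : Matrix (C × V) ((V × V) ⊕ (C × C)) (ZMod 2) :=
  Matrix.fromCols (H ⊗ₖ (1 : Matrix V V (ZMod 2))) ((1 : Matrix C C (ZMod 2)) ⊗ₖ Hᵀ)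

lemma HZ_eq_submatrix (H : Matrix C V (ZMod 2)) :
    HZ H = (HX H).submatrix (Equiv.prodComm C V)
      (Equiv.sumCongr (Equiv.prodComm V V) (Equiv.prodComm C C)) := by
  ext ⟨c, v⟩ j
  rcases j with ⟨v₁, v₂⟩ | ⟨c₁, c₂⟩ <;>
    simp [HX, HZ, Matrix.fromCols, mul_comm]

lemma rank_HX (H : Matrix C V (ZMod 2)) :
    (HX H).rank + H.rank * H.rank
      = Fintype.card V * H.rank + H.rank * Fintype.card C := by
  set U₁ : Submodule (ZMod 2) (V × C → ZMod 2) :=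
    LinearMap.range ((1 : Matrix V V (ZMod 2)) ⊗ₖ H).mulVecLin with hU₁
  set U₂ : Submodule (ZMod 2) (V × C → ZMod 2) :=
    LinearMap.range (Hᵀ ⊗ₖ (1 : Matrix C C (ZMod 2))).mulVecLin with hU₂
  have h1 : (HX H).rank = Module.finrank (ZMod 2) ↥(U₁ ⊔ U₂) := by
    rw [Matrix.rank, HX, range_fromCols_mulVecLin, hU₁, hU₂]
  have h2 := Submodule.finrank_sup_add_finrank_inf_eq U₁ U₂
  have hinf : U₁ ⊓ U₂ = LinearMap.range (Hᵀ ⊗ₖ H).mulVecLin := by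
    rw [hU₁, hU₂, inf_range_kronecker]
  rw [hinf] at h2
  have h3 : Module.finrank (ZMod 2) U₁ = Fintype.card V * H.rank := by
    rw [hU₁, ← Matrix.rank, rank_kronecker, Matrix.rank_one]
  have h4 : Module.finrank (ZMod 2) U₂ = H.rank * Fintype.card C := by
    rw [hU₂, ← Matrix.rank, rank_kronecker, Matrix.rank_one, Matrix.rank_transpose]
  have h5 : Module.finrank (ZMod 2) (LinearMap.range (Hᵀ ⊗ₖ H).mulVecLin)
      = H.rank * H.rank := by
    rw [← Matrix.rank, rank_kronecker, Matrix.rank_transpose]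
  rw [h1, ← h3, ← h4, ← h5, h2]

/-- Dimension of the hypergraph product code:
`(n² + m²) − rank H_X − rank H_Z = k² + k̃²`. -/
theorem stmt_4 (H : Matrix C V (ZMod 2)) :
    Fintype.card V ^ 2 + Fintype.card C ^ 2 - (HX H).rank - (HZ H).rank =
      Module.finrank (ZMod 2) (LinearMap.ker H.mulVecLin) ^ 2 +
      Module.finrank (ZMod 2) (LinearMap.ker Hᵀ.mulVecLin) ^ 2 := by
  set n := Fintype.card V
  set m := Fintype.card C
  set r := H.rank with hr
  set k := Module.finrank (ZMod 2) (LinearMap.ker H.mulVecLin) with hk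
  set k' := Module.finrank (ZMod 2) (LinearMap.ker Hᵀ.mulVecLin) with hk'
  have hZX : (HZ H).rank = (HX H).rank := by
    rw [HZ_eq_submatrix, rank_submatrix_equiv]
  have hrk : r + k = n := by
    have := LinearMap.finrank_range_add_finrank_ker H.mulVecLin
    rwa [Module.finrank_fintype_fun_eq_card, ← Matrix.rank] at this
  have hrk' : r + k' = m := by
    have := LinearMap.finrank_range_add_finrank_ker Hᵀ.mulVecLin
    rwa [Module.finrank_fintype_fun_eq_card, ← Matrix.rank, Matrix.rank_transpose] at this
  have hX := rank_HX H
  rw [← hr] at hX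
  have key : n ^ 2 + m ^ 2 = (HX H).rank + (HZ H).rank + (k ^ 2 + k' ^ 2) := by
    rw [hZX]
    nlinarith [hX, hrk, hrk']
  rw [key, Nat.add_assoc, Nat.add_sub_cancel_left, Nat.add_sub_cancel_left]
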